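/- Let p and q be coprime integers with 1 < p < q. Then every coefficient of Δ_{p,q}(X) lies in the set {−1, 0, 1}. -/

import Mathlib

open Polynomial

open scoped Classical in
noncomputable def torusS (p q : ℕ) : PowerSeries ℤ :=
  PowerSeries.mk fun n => if ∃ a b : ℕ, b < p ∧ n = p * a + q * b then 1 else 0

open scoped Classical in
noncomputable def torusG (p q : ℕ) : PowerSeries ℤ :=
  PowerSeries.mk fun n => if ∃ b : ℕ, b < p ∧ n = q * b then 1 else 0

theorem torus_uniq {p q : ℕ} (hp : 0 < p) (hcop : Nat.Coprime p q)
    {a b a' b' : ℕ} (hb : b < p) (hb' : b' < p)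
    (h : p * a + q * b = p * a' + q * b') : b = b' ∧ a = a' := by
  have hsum : q * b + p * a = q * b' + p * a' := by omega
  have hmod : q * b ≡ q * b' [MOD p] := by
    unfold Nat.ModEq
    calc q * b % p = (q * b + p * a) % p := (Nat.add_mul_mod_self_left _ _ _).symm
      _ = (q * b' + p * a') % p := by rw [hsum]
      _ = q * b' % p := Nat.add_mul_mod_self_left _ _ _
  have hbb : b ≡ b' [MOD p] :=
    hmod.cancel_left_of_coprime (by simpa [Nat.coprime_comm] using hcop)
  have hbe : b % p = b' % p := hbb
  rw [Nat.mod_eq_of_lt hb, Nat.mod_eq_of_lt hb'] at hbe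
  subst hbe
  exact ⟨rfl, Nat.eq_of_mul_eq_mul_left hp (show p * a = p * a' by omega)⟩

theorem torus_knot_alexander_coeffs_pm_one (p q : ℕ) (hp : 1 < p) (hpq : p < q)
    (hcop : Nat.Coprime p q) (Δ : ℤ[X])
    (hΔ : Δ * ((X ^ p - 1) * (X ^ q - 1)) = (X ^ (p * q) - 1) * (X - 1)) :
    ∀ n : ℕ, Δ.coeff n ∈ ({-1, 0, 1} : Set ℤ) := by
  classical
  set S := torusS p q with hSdef
  set G := torusG p q with hGdef
  have hp0 : 0 < p := by omega
  have hq0 : 0 < q := by omega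
  have hps : ∀ x : ℕ, p * (x + 1) = p * x + p := fun x => by ring
  have hqs : ∀ x : ℕ, q * (x + 1) = q * x + q := fun x => by ring
  have hcm : p * q = q * p := mul_comm p q
  have hs : ∀ n, PowerSeries.coeff n S =
      if ∃ a b : ℕ, b < p ∧ n = p * a + q * b then 1 else 0 := by
    intro n; simp [hSdef, torusS]
  have hg : ∀ n, PowerSeries.coeff n G =
      if ∃ b : ℕ, b < p ∧ n = q * b then 1 else 0 := by
    intro n; simp [hGdef, torusG]
  have hFE : ∀ n : ℕ, (∃ b : ℕ, b < p ∧ n = q * b) →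
      (∃ a b : ℕ, b < p ∧ n = p * a + q * b) := by
    rintro n ⟨b, hb, rfl⟩; exact ⟨0, b, hb, by ring⟩
  -- Key identity 1 : S * (X^p - 1) = -G
  have key1 : S * ((PowerSeries.X : PowerSeries ℤ) ^ p - 1) = -G := by
    ext n
    rw [mul_sub, mul_one, map_sub, PowerSeries.coeff_mul_X_pow', map_neg, hs, hs, hg]
    by_cases hF : ∃ b : ℕ, b < p ∧ n = q * b
    · rw [if_pos (hFE n hF), if_pos hF]
      obtain ⟨b, hb, hbn⟩ := hF
      rcases le_or_gt p n with hle | hlt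
      · rw [if_pos hle, if_neg ?_]
        · norm_num
        rintro ⟨a', b', hb', hEq⟩
        have h0 : p * 0 + q * b = p * (a' + 1) + q * b' := by
          have := hps a'; omega
        have := torus_uniq hp0 hcop hb hb' h0
        omega
      · rw [if_neg (not_le.mpr hlt)]; norm_num
    · rw [if_neg hF]
      by_cases hE : ∃ a b : ℕ, b < p ∧ n = p * a + q * b
      · rw [if_pos hE]
        obtain ⟨a, b, hb, hEq⟩ := hE
        rcases Nat.eq_zero_or_pos a with rfl | ha
        · exact absurd ⟨b, hb, by omega⟩ hF
        · obtain ⟨c, rfl⟩ : ∃ c, a = c + 1 := ⟨a - 1, by omega⟩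
          have hle : p ≤ n := by have := hps c; omega
          rw [if_pos hle, if_pos ⟨c, b, hb, by have := hps c; omega⟩]
          norm_num
      · rw [if_neg hE]
        rcases le_or_gt p n with hle | hlt
        · rw [if_pos hle, if_neg ?_]
          · norm_num
          rintro ⟨a', b', hb', hEq⟩
          exact hE ⟨a' + 1, b', hb', by have := hps a'; omega⟩
        · rw [if_neg (not_le.mpr hlt)]; norm_num
  -- Key identity 2 : G * (X^q - 1) = X^(p*q) - 1
  have key2 : G * ((PowerSeries.X : PowerSeries ℤ) ^ q - 1) =
      (PowerSeries.X : PowerSeries ℤ) ^ (p * q) - 1 := by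
    have hqpq : q ≤ p * q := Nat.le_mul_of_pos_left q hp0
    have hq1 : q * (p - 1) + q = q * p := by
      rw [← hqs (p - 1), Nat.sub_add_cancel hp0]
    ext n
    rw [mul_sub, mul_one, map_sub, map_sub, PowerSeries.coeff_mul_X_pow',
      PowerSeries.coeff_X_pow, PowerSeries.coeff_one, hg, hg]
    by_cases h0 : n = 0
    · subst h0
      rw [if_neg (by omega : ¬ q ≤ 0), if_pos ⟨0, by omega, by omega⟩,
        if_neg (by intro h; omega : ¬ (0 : ℕ) = p * q), if_pos rfl]
    · by_cases hpqn : n = p * q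
      · subst hpqn
        rw [if_pos hqpq, if_pos ⟨p - 1, by omega, by omega⟩, if_neg ?_, if_pos rfl,
          if_neg h0]
        rintro ⟨b, hb, hEq⟩
        have hqb : q * b = q * p := by omega
        have := Nat.eq_of_mul_eq_mul_left hq0 hqb
        omega
      · rw [if_neg hpqn, if_neg h0]
        by_cases hF : ∃ b : ℕ, b < p ∧ n = q * b
        · obtain ⟨b, hb, hEq⟩ := hF
          have hbpos : 0 < b := by
            rcases Nat.eq_zero_or_pos b with rfl | h
            · omega
            · exact h
          have hqn : q ≤ n := by
            have : q ≤ q * b := Nat.le_mul_of_pos_right q hbpos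
            omega
          have h' : q * (b - 1) + q = q * b := by
            rw [← hqs (b - 1), Nat.sub_add_cancel hbpos]
          rw [if_pos hqn, if_pos ⟨b - 1, by omega, by omega⟩, if_pos ⟨b, hb, hEq⟩]
          norm_num
        · rw [if_neg hF]
          rcases le_or_gt q n with hle | hlt
          · rw [if_pos hle, if_neg ?_]
            rintro ⟨b, hb, hEq⟩
            have hb1 : b + 1 < p := by
              rcases Nat.lt_or_ge (b + 1) p with h | h
              · exact h
              · exfalso
                have hbp : b + 1 = p := by omega
                apply hpqn
                have hx2 := hqs b
                rw [hbp] at hx2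
                omega
            exact hF ⟨b + 1, hb1, by have := hqs b; omega⟩
          · rw [if_neg (not_le.mpr hlt)]
  -- transfer hΔ to power series
  have h2 : (↑Δ : PowerSeries ℤ) *
      (((PowerSeries.X : PowerSeries ℤ) ^ p - 1) * ((PowerSeries.X : PowerSeries ℤ) ^ q - 1)) =
      ((PowerSeries.X : PowerSeries ℤ) ^ (p * q) - 1) * ((PowerSeries.X : PowerSeries ℤ) - 1) := by
    have := congrArg (fun f : ℤ[X] => (↑f : PowerSeries ℤ)) hΔ
    simpa [Polynomial.coe_mul, Polynomial.coe_sub, Polynomial.coe_pow, Polynomial.coe_X,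
      Polynomial.coe_one] using this
  have hcalc : (S * (1 - PowerSeries.X)) *
      (((PowerSeries.X : PowerSeries ℤ) ^ p - 1) * ((PowerSeries.X : PowerSeries ℤ) ^ q - 1)) =
      ((PowerSeries.X : PowerSeries ℤ) ^ (p * q) - 1) * ((PowerSeries.X : PowerSeries ℤ) - 1) := by
    calc (S * (1 - PowerSeries.X)) *
        (((PowerSeries.X : PowerSeries ℤ) ^ p - 1) * ((PowerSeries.X : PowerSeries ℤ) ^ q - 1))
        = (S * ((PowerSeries.X : PowerSeries ℤ) ^ p - 1)) *
          ((PowerSeries.X : PowerSeries ℤ) ^ q - 1) * (1 - PowerSeries.X) := by ring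
      _ = (-G) * ((PowerSeries.X : PowerSeries ℤ) ^ q - 1) * (1 - PowerSeries.X) := by rw [key1]
      _ = -(G * ((PowerSeries.X : PowerSeries ℤ) ^ q - 1)) * (1 - PowerSeries.X) := by ring
      _ = -((PowerSeries.X : PowerSeries ℤ) ^ (p * q) - 1) * (1 - PowerSeries.X) := by rw [key2]
      _ = ((PowerSeries.X : PowerSeries ℤ) ^ (p * q) - 1) *
          ((PowerSeries.X : PowerSeries ℤ) - 1) := by ring
  have hABne : (((PowerSeries.X : PowerSeries ℤ) ^ p - 1) *
      ((PowerSeries.X : PowerSeries ℤ) ^ q - 1)) ≠ 0 := by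
    intro h
    have := congrArg (PowerSeries.constantCoeff (R := ℤ)) h
    simp [zero_pow hp0.ne', zero_pow hq0.ne'] at this
  have hΔS : (↑Δ : PowerSeries ℤ) = S * (1 - PowerSeries.X) :=
    mul_right_cancel₀ hABne (h2.trans hcalc.symm)
  intro n
  have hco : Δ.coeff n = PowerSeries.coeff n (↑Δ : PowerSeries ℤ) :=
    (Polynomial.coeff_coe Δ n).symm
  rw [hco, hΔS]
  have hx : PowerSeries.coeff n (S * (1 - PowerSeries.X)) =
      PowerSeries.coeff n S - (if 1 ≤ n then PowerSeries.coeff (n - 1) S else 0) := by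
    rw [mul_sub, mul_one, map_sub]
    congr 1
    rw [show (PowerSeries.X : PowerSeries ℤ) = PowerSeries.X ^ 1 by rw [pow_one],
      PowerSeries.coeff_mul_X_pow']
  rw [hx]
  have h01 : ∀ m : ℕ, PowerSeries.coeff m S = 0 ∨ PowerSeries.coeff m S = 1 := by
    intro m; rw [hs]; split_ifs <;> simp
  have ha := h01 n
  have hb : (if 1 ≤ n then PowerSeries.coeff (n - 1) S else 0) = 0 ∨
      (if 1 ≤ n then PowerSeries.coeff (n - 1) S else 0) = 1 := by
    split_ifs
    · exact h01 (n - 1)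
    · left; rfl
  simp only [Set.mem_insert_iff, Set.mem_singleton_iff]
  omega
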